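/- Suppose (Θ̂, Γ̂) is a local minimizer of Q₂(λ, ·, ·) and set Ω̂_jl^(k) = θ̂_jl Γ̂_jl^(k) for all j, l, k. Then for all 1 ≤ j, l ≤ p with j ≠ l: if θ̂_jl ≠ 0, then θ̂_jl = (λ Σ_{k=1}^K ‖Ω̂_jl^(k)‖_F)^{1/2}. -/
import Mathlib


open scoped BigOperators
open Matrix

noncomputable section

namespace JF

/-- Frobenius norm of a real matrix. -/
def frobG {α β : Type*} [Fintype α] [Fintype β] (B : Matrix α β ℝ) : ℝ :=
  Real.sqrt (∑ a, ∑ b, B a b ^ 2)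

/-- The `(j,l)` block (an `M × M` matrix) of a `pM × pM` matrix. -/
def blk {p M : ℕ} (A : Matrix (Fin p × Fin M) (Fin p × Fin M) ℝ) (j l : Fin p) :
    Matrix (Fin M) (Fin M) ℝ := fun a b => A (j, a) (l, b)

/-- `M`-block version of the ℓ∞ matrix norm: `max_j Σ_l ‖A_{jl}‖_F`. -/
def blockInfty {p M : ℕ} (A : Matrix (Fin p × Fin M) (Fin p × Fin M) ℝ) : ℝ :=
  ⨆ j, ∑ l, frobG (blk A j l)

/-- `M`-block version of the max (elementwise ℓ∞) norm: `max_{j,l} ‖A_{jl}‖_F`. -/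
def blockMax {p M : ℕ} (A : Matrix (Fin p × Fin M) (Fin p × Fin M) ℝ) : ℝ :=
  ⨆ j, ⨆ l, frobG (blk A j l)

/-- `M`-block version of the ℓ₁ matrix norm: `max_l Σ_j ‖A_{jl}‖_F`. -/
def blockOne {p M : ℕ} (A : Matrix (Fin p × Fin M) (Fin p × Fin M) ℝ) : ℝ :=
  ⨆ l, ∑ j, frobG (blk A j l)

/-- Generalized block ℓ∞ norm, with block-rows/columns indexed by an arbitrary
finite type `ι` and blocks of shape `α × α`. -/
def bInftyG {ι α : Type*} [Fintype ι] [Fintype α] (A : Matrix (ι × α) (ι × α) ℝ) : ℝ :=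
  ⨆ j, ∑ l, frobG (fun a b => A (j, a) (l, b))

/-- Entrywise ℓ₁ norm of a matrix. -/
def ell1 {α β : Type*} [Fintype α] [Fintype β] (A : Matrix α β ℝ) : ℝ :=
  ∑ i, ∑ j, |A i j|

/-- `j`-th block of a vector in `ℝ^{pM}`. -/
def vblk {p M : ℕ} (u : Fin p × Fin M → ℝ) (j : Fin p) : Fin M → ℝ := fun a => u (j, a)

/-- Euclidean norm of a vector. -/
def vnorm2 {M : ℕ} (v : Fin M → ℝ) : ℝ := Real.sqrt (∑ a, v a ^ 2)

/-- Block max norm of a vector in `ℝ^{pM}`: `max_j ‖u_j‖_2`. -/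
def vBlockMax {p M : ℕ} (u : Fin p × Fin M → ℝ) : ℝ := ⨆ j, vnorm2 (vblk u j)

/-- `j`-th block of a `pM × M` vertically stacked block matrix. -/
def sblk {p M : ℕ} (x : Matrix (Fin p × Fin M) (Fin M) ℝ) (j : Fin p) :
    Matrix (Fin M) (Fin M) ℝ := fun a b => x (j, a) b

/-- `max_j ‖x_j‖_F` for a `pM × M` stacked block matrix. -/
def stackMax {p M : ℕ} (x : Matrix (Fin p × Fin M) (Fin M) ℝ) : ℝ :=
  ⨆ j, frobG (sblk x j)

/-- `Σ_j ‖x_j‖_F` for a `pM × M` stacked block matrix. -/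
def stackOne {p M : ℕ} (x : Matrix (Fin p × Fin M) (Fin M) ℝ) : ℝ :=
  ∑ j, frobG (sblk x j)

/-- The block matrix `Ω` with blocks `Ω_{jl} = θ_{jl} Γ_{jl}`. -/
def mkOmega {p M : ℕ} (Θ : Matrix (Fin p) (Fin p) ℝ)
    (G : Matrix (Fin p × Fin M) (Fin p × Fin M) ℝ) :
    Matrix (Fin p × Fin M) (Fin p × Fin M) ℝ :=
  fun x y => Θ x.1 y.1 * G x y

/-- Feasible parameters `(Θ, Γ)` for the joint functional graphical model:
`Θ` symmetric with nonnegative off-diagonal and positive diagonal entries,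
each `Γ^{(k)}` block-symmetric (`Γ_{lj} = Γ_{jl}ᵀ`), and every
`Ω^{(k)} = (θ_{jl} Γ^{(k)}_{jl})` symmetric positive definite. -/
def Feasible {p M K : ℕ} (Θ : Matrix (Fin p) (Fin p) ℝ)
    (Γ : Fin K → Matrix (Fin p × Fin M) (Fin p × Fin M) ℝ) : Prop :=
  Θ.IsSymm ∧ (∀ j l : Fin p, j ≠ l → 0 ≤ Θ j l) ∧ (∀ j : Fin p, 0 < Θ j j) ∧
    (∀ (k : Fin K) (j l : Fin p), blk (Γ k) l j = (blk (Γ k) j l)ᵀ) ∧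
    (∀ k : Fin K, (mkOmega Θ (Γ k)).PosDef)

/-- The negative log-likelihood part `Σ_k [tr(Σ̂^{(k)} Ω^{(k)}) − log det Ω^{(k)}]`. -/
def loss {p M K : ℕ}
    (Sig Ω : Fin K → Matrix (Fin p × Fin M) (Fin p × Fin M) ℝ) : ℝ :=
  ∑ k, (Matrix.trace (Sig k * Ω k) - Real.log (Ω k).det)

/-- `Σ_{j≠l} θ_{jl}`. -/
def pen1 {p : ℕ} (Θ : Matrix (Fin p) (Fin p) ℝ) : ℝ :=
  ∑ q ∈ (Finset.univ : Finset (Fin p)).offDiag, Θ q.1 q.2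

/-- `Σ_{j≠l} Σ_k ‖Γ^{(k)}_{jl}‖_F`. -/
def pen2 {p M K : ℕ} (Γ : Fin K → Matrix (Fin p × Fin M) (Fin p × Fin M) ℝ) : ℝ :=
  ∑ q ∈ (Finset.univ : Finset (Fin p)).offDiag, ∑ k, frobG (blk (Γ k) q.1 q.2)

/-- The objective `Q₁(λ₁, λ₂, Θ, Γ)`. -/
def Q1 {p M K : ℕ} (Sig : Fin K → Matrix (Fin p × Fin M) (Fin p × Fin M) ℝ)
    (l1 l2 : ℝ) (Θ : Matrix (Fin p) (Fin p) ℝ)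
    (Γ : Fin K → Matrix (Fin p × Fin M) (Fin p × Fin M) ℝ) : ℝ :=
  loss Sig (fun k => mkOmega Θ (Γ k)) + l1 * pen1 Θ + l2 * pen2 Γ

/-- The objective `Q₂(λ, Θ, Γ)`. -/
def Q2 {p M K : ℕ} (Sig : Fin K → Matrix (Fin p × Fin M) (Fin p × Fin M) ℝ)
    (lam : ℝ) (Θ : Matrix (Fin p) (Fin p) ℝ)
    (Γ : Fin K → Matrix (Fin p × Fin M) (Fin p × Fin M) ℝ) : ℝ :=
  loss Sig (fun k => mkOmega Θ (Γ k)) + pen1 Θ + lam * pen2 Γ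

/-- The objective `Q₃(λ, Ω)`. -/
def Q3 {p M K : ℕ} (Sig : Fin K → Matrix (Fin p × Fin M) (Fin p × Fin M) ℝ)
    (lam : ℝ) (Ω : Fin K → Matrix (Fin p × Fin M) (Fin p × Fin M) ℝ) : ℝ :=
  loss Sig Ω + lam * ∑ q ∈ (Finset.univ : Finset (Fin p)).offDiag,
    Real.sqrt (∑ k, frobG (blk (Ω k) q.1 q.2))

/-- The ℓ₁ distance `‖Θ − Θ'‖₁ + Σ_k ‖Γ^{(k)} − Γ'^{(k)}‖₁` between parameter pairs. -/
def paramDist {p M K : ℕ} (Θ Θ' : Matrix (Fin p) (Fin p) ℝ)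
    (Γ Γ' : Fin K → Matrix (Fin p × Fin M) (Fin p × Fin M) ℝ) : ℝ :=
  ell1 (Θ - Θ') + ∑ k, ell1 (Γ k - Γ' k)

/-- `(Θ̂, Γ̂)` is a local minimizer of `Q₁(λ₁, λ₂, ·, ·)` (parameters restricted to
`θ_{jj} = 1`). -/
def IsLocalMinQ1 {p M K : ℕ}
    (Sig : Fin K → Matrix (Fin p × Fin M) (Fin p × Fin M) ℝ)
    (l1 l2 : ℝ) (Θh : Matrix (Fin p) (Fin p) ℝ)
    (Γh : Fin K → Matrix (Fin p × Fin M) (Fin p × Fin M) ℝ) : Prop :=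
  (Feasible Θh Γh ∧ ∀ j, Θh j j = 1) ∧
    ∃ δ > 0, ∀ Θ Γ, Feasible Θ Γ → (∀ j, Θ j j = 1) →
      paramDist Θ Θh Γ Γh < δ → Q1 Sig l1 l2 Θh Γh ≤ Q1 Sig l1 l2 Θ Γ

/-- `(Θ̂, Γ̂)` is a local minimizer of `Q₂(λ, ·, ·)` over the full parameter space. -/
def IsLocalMinQ2 {p M K : ℕ}
    (Sig : Fin K → Matrix (Fin p × Fin M) (Fin p × Fin M) ℝ)
    (lam : ℝ) (Θh : Matrix (Fin p) (Fin p) ℝ)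
    (Γh : Fin K → Matrix (Fin p × Fin M) (Fin p × Fin M) ℝ) : Prop :=
  Feasible Θh Γh ∧
    ∃ δ > 0, ∀ Θ Γ, Feasible Θ Γ →
      paramDist Θ Θh Γ Γh < δ → Q2 Sig lam Θh Γh ≤ Q2 Sig lam Θ Γ

/-- `Ω̂` is a local minimizer of `Q₃(λ, ·)` over `K`-tuples of symmetric positive
definite matrices. -/
def IsLocalMinQ3 {p M K : ℕ}
    (Sig : Fin K → Matrix (Fin p × Fin M) (Fin p × Fin M) ℝ)
    (lam : ℝ) (Ωh : Fin K → Matrix (Fin p × Fin M) (Fin p × Fin M) ℝ) : Prop :=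
  (∀ k, (Ωh k).PosDef) ∧
    ∃ δ > 0, ∀ Ω : Fin K → Matrix (Fin p × Fin M) (Fin p × Fin M) ℝ,
      (∀ k, (Ω k).PosDef) →
      (∑ k, ell1 (Ω k - Ωh k)) < δ → Q3 Sig lam Ωh ≤ Q3 Sig lam Ω


/-! ### Auxiliary definitions and lemmas for Statement 5 -/

/-- Scale entries `(j,l)` and `(l,j)` of `Θ` by `c`. -/
def scT {p : ℕ} (j l : Fin p) (c : ℝ) (Θ : Matrix (Fin p) (Fin p) ℝ) :
    Matrix (Fin p) (Fin p) ℝ :=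
  fun a b => if (a = j ∧ b = l) ∨ (a = l ∧ b = j) then c * Θ a b else Θ a b

/-- Scale blocks `(j,l)` and `(l,j)` of `G` by `c⁻¹`. -/
def scG {p M : ℕ} (j l : Fin p) (c : ℝ) (G : Matrix (Fin p × Fin M) (Fin p × Fin M) ℝ) :
    Matrix (Fin p × Fin M) (Fin p × Fin M) ℝ :=
  fun x y => if (x.1 = j ∧ y.1 = l) ∨ (x.1 = l ∧ y.1 = j) then c⁻¹ * G x y else G x y

lemma mkOmega_sc {p M : ℕ} (j l : Fin p) {c : ℝ} (hc : c ≠ 0)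
    (Θ : Matrix (Fin p) (Fin p) ℝ) (G : Matrix (Fin p × Fin M) (Fin p × Fin M) ℝ) :
    mkOmega (scT j l c Θ) (scG j l c G) = mkOmega Θ G := by
  funext x y
  simp only [mkOmega, scT, scG]
  by_cases h : (x.1 = j ∧ y.1 = l) ∨ (x.1 = l ∧ y.1 = j)
  · rw [if_pos h, if_pos h]
    field_simp
  · rw [if_neg h, if_neg h]

lemma frobG_nonneg {α β : Type*} [Fintype α] [Fintype β] (B : Matrix α β ℝ) :
    0 ≤ frobG B := Real.sqrt_nonneg _

lemma ell1_nonneg {α β : Type*} [Fintype α] [Fintype β] (B : Matrix α β ℝ) :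
    0 ≤ ell1 B :=
  Finset.sum_nonneg fun _ _ => Finset.sum_nonneg fun _ _ => abs_nonneg _

lemma frobG_smul {α β : Type*} [Fintype α] [Fintype β] (t : ℝ) (B : Matrix α β ℝ) :
    frobG (fun a b => t * B a b) = |t| * frobG B := by
  unfold frobG
  rw [← Real.sqrt_sq_eq_abs, ← Real.sqrt_mul (sq_nonneg t)]
  congr 1
  rw [Finset.mul_sum]
  refine Finset.sum_congr rfl fun a _ => ?_
  rw [Finset.mul_sum]
  exact Finset.sum_congr rfl fun b _ => by ring

lemma frobG_transpose {α β : Type*} [Fintype α] [Fintype β] (B : Matrix α β ℝ) :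
    frobG Bᵀ = frobG B := by
  unfold frobG
  congr 1
  rw [Finset.sum_comm]
  rfl

lemma pen1_sc {p : ℕ} {j l : Fin p} (hjl : j ≠ l) {Θ : Matrix (Fin p) (Fin p) ℝ}
    (hsym : Θ.IsSymm) (c : ℝ) :
    pen1 (scT j l c Θ) = pen1 Θ + 2 * (c - 1) * Θ j l := by
  have hΘlj : Θ l j = Θ j l := hsym.apply j l
  have hmem : ((j, l) : Fin p × Fin p) ∈ (Finset.univ : Finset (Fin p)).offDiag := by
    simp [Finset.mem_offDiag, hjl]
  have hmem' : ((l, j) : Fin p × Fin p) ∈ (Finset.univ : Finset (Fin p)).offDiag := by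
    simp [Finset.mem_offDiag, hjl.symm]
  have key : ∀ q ∈ (Finset.univ : Finset (Fin p)).offDiag,
      scT j l c Θ q.1 q.2 = Θ q.1 q.2
        + ((if q = (j, l) then (c - 1) * Θ j l else 0)
          + (if q = (l, j) then (c - 1) * Θ j l else 0)) := by
    rintro ⟨a, b⟩ _
    simp only [scT]
    by_cases h1 : a = j ∧ b = l
    · have hne : ((a, b) : Fin p × Fin p) ≠ (l, j) := by
        intro hcontra
        rw [Prod.mk.injEq] at hcontra
        exact hjl (h1.1.symm.trans hcontra.1)
      rw [if_pos (Or.inl h1), if_pos (Prod.ext h1.1 h1.2), if_neg hne, h1.1, h1.2]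
      ring
    · by_cases h2 : a = l ∧ b = j
      · have hne : ((a, b) : Fin p × Fin p) ≠ (j, l) := by
          intro hcontra
          rw [Prod.mk.injEq] at hcontra
          exact hjl (hcontra.1.symm.trans h2.1)
        rw [if_pos (Or.inr h2), if_neg hne, if_pos (Prod.ext h2.1 h2.2), h2.1, h2.2, hΘlj]
        ring
      · have hne : ((a, b) : Fin p × Fin p) ≠ (j, l) := by
          intro hcontra; rw [Prod.mk.injEq] at hcontra; exact h1 hcontra
        have hne' : ((a, b) : Fin p × Fin p) ≠ (l, j) := by
          intro hcontra; rw [Prod.mk.injEq] at hcontra; exact h2 hcontra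
        rw [if_neg (by tauto), if_neg hne, if_neg hne']
        ring
  unfold pen1
  rw [Finset.sum_congr rfl key, Finset.sum_add_distrib, Finset.sum_add_distrib,
    Finset.sum_ite_eq' _ ((j, l) : Fin p × Fin p), Finset.sum_ite_eq' _ ((l, j) : Fin p × Fin p),
    if_pos hmem, if_pos hmem']
  ring

lemma blk_scG_on {p M : ℕ} {j l : Fin p} (c : ℝ)
    (G : Matrix (Fin p × Fin M) (Fin p × Fin M) ℝ) {a b : Fin p}
    (hab : (a = j ∧ b = l) ∨ (a = l ∧ b = j)) :
    blk (scG j l c G) a b = fun x y => c⁻¹ * blk G a b x y := by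
  funext x y
  simp only [blk, scG]
  rw [if_pos hab]

lemma blk_scG_off {p M : ℕ} {j l : Fin p} (c : ℝ)
    (G : Matrix (Fin p × Fin M) (Fin p × Fin M) ℝ) {a b : Fin p}
    (hab : ¬((a = j ∧ b = l) ∨ (a = l ∧ b = j))) :
    blk (scG j l c G) a b = blk G a b := by
  funext x y
  simp only [blk, scG]
  rw [if_neg hab]

lemma pen2_sc {p M K : ℕ} {j l : Fin p} (hjl : j ≠ l)
    {Γ : Fin K → Matrix (Fin p × Fin M) (Fin p × Fin M) ℝ}
    (hγ : ∀ (k : Fin K) (j' l' : Fin p), blk (Γ k) l' j' = (blk (Γ k) j' l')ᵀ)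
    {c : ℝ} (hc : 0 < c) :
    pen2 (fun k => scG j l c (Γ k))
      = pen2 Γ + 2 * (c⁻¹ - 1) * ∑ k, frobG (blk (Γ k) j l) := by
  have hcinv : 0 ≤ c⁻¹ := le_of_lt (inv_pos.mpr hc)
  have habs : |c⁻¹| = c⁻¹ := abs_of_nonneg hcinv
  have hmem : ((j, l) : Fin p × Fin p) ∈ (Finset.univ : Finset (Fin p)).offDiag := by
    simp [Finset.mem_offDiag, hjl]
  have hmem' : ((l, j) : Fin p × Fin p) ∈ (Finset.univ : Finset (Fin p)).offDiag := by
    simp [Finset.mem_offDiag, hjl.symm]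
  have hflip : ∀ k, frobG (blk (Γ k) l j) = frobG (blk (Γ k) j l) := by
    intro k; rw [hγ k j l, frobG_transpose]
  have key : ∀ q ∈ (Finset.univ : Finset (Fin p)).offDiag,
      (∑ k, frobG (blk (scG j l c (Γ k)) q.1 q.2))
        = (∑ k, frobG (blk (Γ k) q.1 q.2))
        + ((if q = (j, l) then (c⁻¹ - 1) * ∑ k, frobG (blk (Γ k) j l) else 0)
          + (if q = (l, j) then (c⁻¹ - 1) * ∑ k, frobG (blk (Γ k) j l) else 0)) := by
    rintro ⟨a, b⟩ _
    by_cases h1 : a = j ∧ b = l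
    · obtain ⟨rfl, rfl⟩ := h1
      have hne : ((a, b) : Fin p × Fin p) ≠ (b, a) := by
        intro hcontra; rw [Prod.mk.injEq] at hcontra; exact hjl hcontra.1
      rw [if_pos rfl, if_neg hne]
      have : ∀ k, frobG (blk (scG a b c (Γ k)) a b) = c⁻¹ * frobG (blk (Γ k) a b) := by
        intro k
        rw [blk_scG_on c (Γ k) (Or.inl ⟨rfl, rfl⟩), frobG_smul, habs]
      rw [Finset.sum_congr rfl fun k _ => this k, ← Finset.mul_sum]
      ring
    · by_cases h2 : a = l ∧ b = j
      · obtain ⟨rfl, rfl⟩ := h2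
        have hne : ((a, b) : Fin p × Fin p) ≠ (b, a) := by
          intro hcontra; rw [Prod.mk.injEq] at hcontra; exact hjl hcontra.2
        rw [if_neg hne, if_pos rfl]
        have : ∀ k, frobG (blk (scG b a c (Γ k)) a b) = c⁻¹ * frobG (blk (Γ k) a b) := by
          intro k
          rw [blk_scG_on c (Γ k) (Or.inr ⟨rfl, rfl⟩), frobG_smul, habs]
        rw [Finset.sum_congr rfl fun k _ => this k, ← Finset.mul_sum]
        have hfl : ∀ k, frobG (blk (Γ k) a b) = frobG (blk (Γ k) b a) := by
          intro k; rw [hγ k b a, frobG_transpose]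
        rw [Finset.sum_congr rfl fun k _ => hfl k]
        ring
      · have hne : ((a, b) : Fin p × Fin p) ≠ (j, l) := by
          intro hcontra; rw [Prod.mk.injEq] at hcontra; exact h1 hcontra
        have hne' : ((a, b) : Fin p × Fin p) ≠ (l, j) := by
          intro hcontra; rw [Prod.mk.injEq] at hcontra; exact h2 hcontra
        rw [if_neg hne, if_neg hne']
        have : ∀ k, frobG (blk (scG j l c (Γ k)) a b) = frobG (blk (Γ k) a b) := by
          intro k; rw [blk_scG_off c (Γ k) (by tauto)]
        rw [Finset.sum_congr rfl fun k _ => this k]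
        ring
  unfold pen2
  rw [Finset.sum_congr rfl key, Finset.sum_add_distrib, Finset.sum_add_distrib,
    Finset.sum_ite_eq' _ ((j, l) : Fin p × Fin p), Finset.sum_ite_eq' _ ((l, j) : Fin p × Fin p),
    if_pos hmem, if_pos hmem']
  ring

lemma feasible_sc {p M K : ℕ} {Θ : Matrix (Fin p) (Fin p) ℝ}
    {Γ : Fin K → Matrix (Fin p × Fin M) (Fin p × Fin M) ℝ}
    (hF : Feasible Θ Γ) {j l : Fin p} (hjl : j ≠ l) {c : ℝ} (hc : 0 < c) :
    Feasible (scT j l c Θ) (fun k => scG j l c (Γ k)) := by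
  obtain ⟨hsym, hoff, hdiag, hγ, hpd⟩ := hF
  refine ⟨?_, ?_, ?_, ?_, ?_⟩
  · show (scT j l c Θ)ᵀ = scT j l c Θ
    funext a b
    simp only [Matrix.transpose_apply, scT]
    have hs : Θ b a = Θ a b := hsym.apply a b
    by_cases h1 : a = j ∧ b = l
    · rw [if_pos (Or.inr ⟨h1.2, h1.1⟩), if_pos (Or.inl h1), hs]
    · by_cases h2 : a = l ∧ b = j
      · rw [if_pos (Or.inl ⟨h2.2, h2.1⟩), if_pos (Or.inr h2), hs]
      · rw [if_neg (by tauto), if_neg (by tauto), hs]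
  · intro a b hab
    simp only [scT]
    split
    · exact mul_nonneg hc.le (hoff a b hab)
    · exact hoff a b hab
  · intro a
    simp only [scT]
    rw [if_neg (by rintro (⟨rfl, rfl⟩ | ⟨rfl, rfl⟩) <;> exact hjl rfl)]
    exact hdiag a
  · intro k j' l'
    funext a b
    show scG j l c (Γ k) (l', a) (j', b) = scG j l c (Γ k) (j', b) (l', a)
    have hE : Γ k (l', a) (j', b) = Γ k (j', b) (l', a) :=
      congrFun (congrFun (hγ k j' l') a) b
    simp only [scG]
    by_cases hR : (j' = j ∧ l' = l) ∨ (j' = l ∧ l' = j)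
    · rw [if_pos (by tauto), if_pos hR, hE]
    · rw [if_neg (by tauto), if_neg hR, hE]
  · intro k
    rw [show mkOmega (scT j l c Θ) (scG j l c (Γ k)) = mkOmega Θ (Γ k) from
      mkOmega_sc j l hc.ne' Θ (Γ k)]
    exact hpd k

lemma ell1_scT_le {p : ℕ} (j l : Fin p) (c : ℝ) (Θ : Matrix (Fin p) (Fin p) ℝ) :
    ell1 (scT j l c Θ - Θ) ≤ |c - 1| * ell1 Θ := by
  unfold ell1
  rw [Finset.mul_sum]
  refine Finset.sum_le_sum fun a _ => ?_
  rw [Finset.mul_sum]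
  refine Finset.sum_le_sum fun b _ => ?_
  simp only [Matrix.sub_apply, scT]
  split
  · rw [show c * Θ a b - Θ a b = (c - 1) * Θ a b by ring, abs_mul]
  · simp only [sub_self, abs_zero]
    positivity

lemma ell1_scG_le {p M : ℕ} (j l : Fin p) (c : ℝ)
    (G : Matrix (Fin p × Fin M) (Fin p × Fin M) ℝ) :
    ell1 (scG j l c G - G) ≤ |c⁻¹ - 1| * ell1 G := by
  unfold ell1
  rw [Finset.mul_sum]
  refine Finset.sum_le_sum fun a _ => ?_
  rw [Finset.mul_sum]
  refine Finset.sum_le_sum fun b _ => ?_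
  simp only [Matrix.sub_apply, scG]
  split
  · rw [show c⁻¹ * G a b - G a b = (c⁻¹ - 1) * G a b by ring, abs_mul]
  · simp only [sub_self, abs_zero]
    positivity

lemma Q2_sc {p M K : ℕ} (Sig : Fin K → Matrix (Fin p × Fin M) (Fin p × Fin M) ℝ)
    (lam : ℝ) {j l : Fin p} (hjl : j ≠ l) {Θ : Matrix (Fin p) (Fin p) ℝ}
    {Γ : Fin K → Matrix (Fin p × Fin M) (Fin p × Fin M) ℝ}
    (hsym : Θ.IsSymm)
    (hγ : ∀ (k : Fin K) (j' l' : Fin p), blk (Γ k) l' j' = (blk (Γ k) j' l')ᵀ)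
    {c : ℝ} (hc : 0 < c) :
    Q2 Sig lam (scT j l c Θ) (fun k => scG j l c (Γ k))
      = Q2 Sig lam Θ Γ + 2 * (c - 1) * Θ j l
        + lam * (2 * (c⁻¹ - 1) * ∑ k, frobG (blk (Γ k) j l)) := by
  unfold Q2
  have hloss : loss Sig (fun k => mkOmega (scT j l c Θ) (scG j l c (Γ k)))
      = loss Sig (fun k => mkOmega Θ (Γ k)) := by
    unfold loss
    refine Finset.sum_congr rfl fun k _ => ?_
    simp only
    rw [mkOmega_sc j l hc.ne' Θ (Γ k)]
  rw [hloss, pen1_sc hjl hsym c, pen2_sc hjl hγ hc]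
  ring

set_option maxHeartbeats 2000000 in
/-- Lemma 2, part 2. If `(Θ̂, Γ̂)` is a local minimizer of
`Q₂(λ, ·, ·)` and `Ω̂^{(k)}_{jl} = θ̂_{jl} Γ̂^{(k)}_{jl}`, then for off-diagonal
`(j,l)` with `θ̂_{jl} ≠ 0`, `θ̂_{jl} = (λ Σ_k ‖Ω̂^{(k)}_{jl}‖_F)^{1/2}`. -/
theorem statement_5 {p M K : ℕ} (hp : 2 ≤ p) (hM : 1 ≤ M) (hK : 1 ≤ K)
    (lam : ℝ) (hlam : 0 < lam)
    (Sig : Fin K → Matrix (Fin p × Fin M) (Fin p × Fin M) ℝ)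
    (hSig : ∀ k, (Sig k).IsSymm)
    (Θh : Matrix (Fin p) (Fin p) ℝ)
    (Γh : Fin K → Matrix (Fin p × Fin M) (Fin p × Fin M) ℝ)
    (h : IsLocalMinQ2 Sig lam Θh Γh) :
    ∀ j l : Fin p, j ≠ l → Θh j l ≠ 0 →
      Θh j l = Real.sqrt (lam * ∑ k, frobG (blk (mkOmega Θh (Γh k)) j l)) := by
  intro j l hjl hθ
  obtain ⟨hF, δ, hδ, hmin⟩ := h
  have hsym := hF.1
  have hγ : ∀ (k : Fin K) (j' l' : Fin p), blk (Γh k) l' j' = (blk (Γh k) j' l')ᵀ :=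
    hF.2.2.2.1
  have θpos : 0 < Θh j l := lt_of_le_of_ne (hF.2.1 j l hjl) (Ne.symm hθ)
  set S : ℝ := ∑ k, frobG (blk (Γh k) j l) with hSdef
  have hS0 : 0 ≤ S := Finset.sum_nonneg fun k _ => frobG_nonneg _
  set E : ℝ := ell1 Θh + (∑ k, ell1 (Γh k)) + 1 with hEdef
  have hE : 0 < E := by
    have h1 : 0 ≤ ell1 Θh := ell1_nonneg _
    have h2 : 0 ≤ ∑ k, ell1 (Γh k) := Finset.sum_nonneg fun k _ => ell1_nonneg _
    simp only [hEdef]; linarith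
  clear_value S E
  -- the basic inequality coming from local minimality at a scaled point
  have base : ∀ c : ℝ, 0 < c → |c - 1| ≤ 1 → |c⁻¹ - 1| ≤ 1 →
      |c - 1| * E < δ/2 → |c⁻¹ - 1| * E < δ/2 →
      0 ≤ 2 * (c - 1) * Θh j l + lam * (2 * (c⁻¹ - 1) * S) := by
    intro c hc h1 h2 hd1 hd2
    have hfeas := feasible_sc hF hjl hc
    have hdist : paramDist (scT j l c Θh) Θh (fun k => scG j l c (Γh k)) Γh < δ := by
      have hb1 : ell1 (scT j l c Θh - Θh) ≤ |c - 1| * ell1 Θh := ell1_scT_le j l c Θh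
      have hb2 : (∑ k, ell1 (scG j l c (Γh k) - Γh k))
          ≤ |c⁻¹ - 1| * ∑ k, ell1 (Γh k) := by
        rw [Finset.mul_sum]
        exact Finset.sum_le_sum fun k _ => ell1_scG_le j l c (Γh k)
      have hle : paramDist (scT j l c Θh) Θh (fun k => scG j l c (Γh k)) Γh
          ≤ |c - 1| * ell1 Θh + |c⁻¹ - 1| * ∑ k, ell1 (Γh k) := by
        unfold paramDist
        exact add_le_add hb1 hb2
      have hM1 : |c - 1| * ell1 Θh ≤ |c - 1| * E := by
        apply mul_le_mul_of_nonneg_left _ (abs_nonneg _)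
        have h2' : 0 ≤ ∑ k, ell1 (Γh k) := Finset.sum_nonneg fun k _ => ell1_nonneg _
        simp only [hEdef]; linarith
      have hM2 : |c⁻¹ - 1| * ∑ k, ell1 (Γh k) ≤ |c⁻¹ - 1| * E := by
        apply mul_le_mul_of_nonneg_left _ (abs_nonneg _)
        have h1' : 0 ≤ ell1 Θh := ell1_nonneg _
        simp only [hEdef]; linarith
      -- use that at least one of the two abs values controls both? use both bounds
      calc paramDist (scT j l c Θh) Θh (fun k => scG j l c (Γh k)) Γh
          ≤ |c - 1| * E + |c⁻¹ - 1| * E := by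
            refine hle.trans (add_le_add hM1 hM2)
        _ < δ := by linarith
    have hQ := hmin _ _ hfeas hdist
    rw [Q2_sc Sig lam hjl hsym hγ hc, ← hSdef] at hQ
    linarith
  -- two-sided inequalities for small ε
  have key : ∀ ε : ℝ, 0 < ε → ε ≤ 1/2 → 2 * ε * E < δ/2 →
      lam * S ≤ Θh j l * (1 + ε) ∧ Θh j l * (1 - ε) ≤ lam * S := by
    intro ε hε hε2 hεδ
    have hεE : ε * E < δ/2 := by nlinarith
    constructor
    · -- c = 1 + ε
      have hc : (0:ℝ) < 1 + ε := by linarith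
      set u : ℝ := (1 + ε)⁻¹ with hudef
      have hu : u * (1 + ε) = 1 := inv_mul_cancel₀ hc.ne'
      have hu0 : 0 < u := inv_pos.mpr hc
      have hu1 : u ≤ 1 := by
        rw [hudef]
        exact inv_le_one_of_one_le₀ (by linarith)
      have hval : u - 1 = -(ε * u) := by linear_combination hu
      have habs1 : |(1 + ε) - 1| = ε := by
        rw [show (1 + ε) - 1 = ε by ring, abs_of_pos hε]
      have habs2 : |(1 + ε)⁻¹ - 1| = ε * u := by
        rw [← hudef, hval, abs_neg, abs_of_nonneg (by positivity)]
      have hεu : ε * u ≤ ε := by nlinarith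
      have hb := base (1 + ε) hc (by rw [habs1]; linarith)
        (by rw [habs2]; linarith)
        (by rw [habs1]; linarith)
        (by rw [habs2]
            have h5 : ε * u * E ≤ ε * E := by nlinarith
            exact lt_of_le_of_lt h5 hεE)
      rw [show (1 + ε) - 1 = ε by ring, ← hudef, hval] at hb
      have hb2 : 2 * ε * (lam * (u * S)) ≤ 2 * ε * Θh j l := by nlinarith
      have h3 : lam * (u * S) ≤ Θh j l :=
        le_of_mul_le_mul_left hb2 (by positivity)
      have h4 : lam * (u * S) * (1 + ε) ≤ Θh j l * (1 + ε) :=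
        mul_le_mul_of_nonneg_right h3 hc.le
      calc lam * S = lam * (u * S) * (1 + ε) := by
            rw [show lam * (u * S) * (1 + ε) = lam * S * (u * (1 + ε)) by ring, hu, mul_one]
        _ ≤ Θh j l * (1 + ε) := h4
    · -- c = 1 - ε
      have hc : (0:ℝ) < 1 - ε := by linarith
      set v : ℝ := (1 - ε)⁻¹ with hvdef
      have hv : v * (1 - ε) = 1 := inv_mul_cancel₀ hc.ne'
      have hv0 : 0 < v := inv_pos.mpr hc
      have hv2 : v ≤ 2 := by
        rw [hvdef, show (2:ℝ) = (2⁻¹)⁻¹ by norm_num]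
        exact inv_anti₀ (by norm_num) (by linarith)
      have hval : v - 1 = ε * v := by linear_combination hv
      have habs1 : |(1 - ε) - 1| = ε := by
        rw [show (1 - ε) - 1 = -ε by ring, abs_neg, abs_of_pos hε]
      have habs2 : |(1 - ε)⁻¹ - 1| = ε * v := by
        rw [← hvdef, hval, abs_of_nonneg (by positivity)]
      have hεv : ε * v ≤ 2 * ε := by nlinarith
      have hb := base (1 - ε) hc (by rw [habs1]; linarith)
        (by rw [habs2]; linarith)
        (by rw [habs1]; linarith)
        (by rw [habs2]
            have h5 : ε * v * E ≤ 2 * ε * E := by nlinarith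
            exact lt_of_le_of_lt h5 hεδ)
      rw [show (1 - ε) - 1 = -ε by ring, ← hvdef, hval] at hb
      have hb2 : 2 * ε * Θh j l ≤ 2 * ε * (lam * (v * S)) := by nlinarith
      have h3 : Θh j l ≤ lam * (v * S) :=
        le_of_mul_le_mul_left hb2 (by positivity)
      have h4 : Θh j l * (1 - ε) ≤ lam * (v * S) * (1 - ε) :=
        mul_le_mul_of_nonneg_right h3 hc.le
      calc Θh j l * (1 - ε) ≤ lam * (v * S) * (1 - ε) := h4
        _ = lam * S := by
            rw [show lam * (v * S) * (1 - ε) = lam * S * (v * (1 - ε)) by ring, hv, mul_one]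
  -- conclude θ = λ S
  have hmain : Θh j l = lam * S := by
    by_contra hne'
    have hd : 0 < |Θh j l - lam * S| := abs_pos.mpr (sub_ne_zero.mpr hne')
    set d : ℝ := |Θh j l - lam * S| with hddef
    clear_value d
    obtain ⟨ε, hεpos, hεhalf, hεδ', hεd⟩ :
        ∃ ε : ℝ, 0 < ε ∧ ε ≤ 1/2 ∧ ε ≤ δ / (8 * E) ∧ ε ≤ d / (2 * Θh j l) :=
      ⟨min (min (1/2) (δ / (8 * E))) (d / (2 * Θh j l)),
        lt_min (lt_min (by norm_num) (by positivity)) (by positivity),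
        le_trans (min_le_left _ _) (min_le_left _ _),
        le_trans (min_le_left _ _) (min_le_right _ _),
        min_le_right _ _⟩
    have hεδ : 2 * ε * E < δ/2 := by
      have h1 : 2 * ε * E ≤ 2 * (δ / (8 * E)) * E :=
        mul_le_mul_of_nonneg_right (by linarith) hE.le
      have h2 : 2 * (δ / (8 * E)) * E = δ / 4 := by
        rw [show 2 * (δ / (8 * E)) * E = (E * (δ * 2)) / (E * 8) by ring,
          mul_div_mul_left _ _ hE.ne']
        ring
      linarith
    obtain ⟨hA, hB⟩ := key ε hεpos hεhalf hεδ
    have hθε : Θh j l * ε ≤ d / 2 := by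
      have := mul_le_mul_of_nonneg_left hεd θpos.le
      have h2θ : Θh j l * (d / (2 * Θh j l)) = d / 2 := by
        rw [show Θh j l * (d / (2 * Θh j l)) = (Θh j l * d) / (Θh j l * 2) by ring,
          mul_div_mul_left _ _ hθ]
      linarith
    have eA : Θh j l * (1 + ε) = Θh j l + Θh j l * ε := by ring
    have eB : Θh j l * (1 - ε) = Θh j l - Θh j l * ε := by ring
    have hA' : lam * S ≤ Θh j l + Θh j l * ε := by linarith [hA, eA]
    have hB' : Θh j l - Θh j l * ε ≤ lam * S := by linarith [hB, eB]
    have habs : d ≤ Θh j l * ε := by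
      rw [hddef, abs_le]
      constructor <;> linarith
    clear hmin base key hF hγ hsym hSig hA hB eA eB hA' hB'
    linarith
  -- final computation
  have hblk : ∀ k, frobG (blk (mkOmega Θh (Γh k)) j l) = Θh j l * frobG (blk (Γh k) j l) := by
    intro k
    have : blk (mkOmega Θh (Γh k)) j l = fun a b => Θh j l * blk (Γh k) j l a b := rfl
    rw [this, frobG_smul, abs_of_pos θpos]
  have hsum : (∑ k, frobG (blk (mkOmega Θh (Γh k)) j l)) = Θh j l * S := by
    rw [hSdef, Finset.mul_sum]
    exact Finset.sum_congr rfl fun k _ => hblk k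
  rw [hsum, show lam * (Θh j l * S) = Θh j l ^ 2 by rw [hmain]; ring,
    Real.sqrt_sq θpos.le]
end JF
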